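/- Under the Bermudan put recursion with q_m ≥ 0, for each 1 ≤ m ≤ M-1 the equation Ṽ_m(S) = K - S has at most one solution S ∈ (0, ∞). -/

import Mathlib

open MeasureTheory

/-- `τ_m = σ_m² (t_m - t_{m-1}) / 2`. -/
noncomputable def tauBS (σ t : ℕ → ℝ) (m : ℕ) : ℝ := (σ m)^2 * (t m - t (m - 1)) / 2

/-- The lognormal density `ρ_m(z,1)` of the Black–Scholes model. -/
noncomputable def rho1BS (r q σ t : ℕ → ℝ) (m : ℕ) (z : ℝ) : ℝ :=
  1 / (2 * Real.sqrt (Real.pi * tauBS σ t m) * z) *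
    Real.exp (-(Real.log z -
      (2 / (σ m)^2) * (r m - q m - (σ m)^2 / 2) * tauBS σ t m)^2 / (4 * tauBS σ t m))

open Set Real


lemma gauss_exponent (τ μ s : ℝ) (hτ : τ ≠ 0) (y : ℝ) :
    s*y - (y-μ)^2/(4*τ) = -(1/(4*τ))*(y - (μ+2*s*τ))^2 + (s*μ + s^2*τ) := by
  field_simp
  ring

lemma gauss_integrable (τ μ s : ℝ) (hτ : 0 < τ) :
    Integrable (fun y => Real.exp (s*y - (y-μ)^2/(4*τ))) := by
  have h : (fun y => Real.exp (s*y - (y-μ)^2/(4*τ)))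
      = fun y => Real.exp (s*μ + s^2*τ) * Real.exp (-(1/(4*τ))*((y - (μ+2*s*τ)))^2) := by
    funext y
    rw [← Real.exp_add, add_comm, ← gauss_exponent τ μ s hτ.ne' y]
  rw [h]
  exact ((integrable_exp_neg_mul_sq (by positivity : (0:ℝ) < 1/(4*τ))).comp_sub_right
    (μ+2*s*τ)).const_mul _

lemma gauss_integral (τ μ s : ℝ) (hτ : 0 < τ) :
    ∫ y : ℝ, Real.exp (s*y - (y-μ)^2/(4*τ))
      = 2 * Real.sqrt (Real.pi * τ) * Real.exp (s*μ + s^2*τ) := by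
  have h : (fun y => Real.exp (s*y - (y-μ)^2/(4*τ)))
      = fun y => Real.exp (s*μ + s^2*τ) * Real.exp (-(1/(4*τ))*((y - (μ+2*s*τ)))^2) := by
    funext y
    rw [← Real.exp_add, add_comm, ← gauss_exponent τ μ s hτ.ne' y]
  rw [h, integral_const_mul,
    integral_sub_right_eq_self (fun y => Real.exp (-(1/(4*τ))*y^2)) (μ+2*s*τ),
    integral_gaussian]
  have : Real.pi / (1/(4*τ)) = 4*(Real.pi*τ) := by field_simp
  rw [this]
  have h4 : Real.sqrt (4*(Real.pi*τ)) = 2 * Real.sqrt (Real.pi*τ) := by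
    rw [show (4:ℝ) = 2^2 by norm_num, Real.sqrt_mul (by positivity), Real.sqrt_sq (by norm_num)]
  rw [h4]; ring

noncomputable def lnrho (τ μ : ℝ) (z : ℝ) : ℝ :=
  1 / (2 * Real.sqrt (Real.pi * τ) * z) *
    Real.exp (-(Real.log z - μ)^2 / (4 * τ))

lemma measurable_lnrho (τ μ : ℝ) : Measurable (lnrho τ μ) := by
  unfold lnrho
  exact (measurable_const.div (measurable_const.mul measurable_id)).mul
    (Real.measurable_exp.comp
      (((Real.measurable_log.sub measurable_const).pow_const 2).neg.div measurable_const))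

lemma exp_image_univ : Real.exp '' Set.univ = Set.Ioi (0:ℝ) := by
  rw [Set.image_univ, Real.range_exp]

lemma integral_Ioi_comp_exp (g : ℝ → ℝ) :
    ∫ z in Set.Ioi (0:ℝ), g z = ∫ y, Real.exp y * g (Real.exp y) := by
  rw [← exp_image_univ,
    integral_image_eq_integral_abs_deriv_smul MeasurableSet.univ
      (fun x _ => (Real.hasDerivAt_exp x).hasDerivWithinAt)
      (Real.exp_injective.injOn) g,
    MeasureTheory.setIntegral_univ]
  simp_rw [abs_of_pos (Real.exp_pos _), smul_eq_mul]

lemma integrableOn_Ioi_comp_exp_iff (g : ℝ → ℝ) :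
    IntegrableOn g (Set.Ioi (0:ℝ)) ↔ Integrable (fun y => Real.exp y * g (Real.exp y)) := by
  rw [← exp_image_univ,
    integrableOn_image_iff_integrableOn_abs_deriv_smul MeasurableSet.univ
      (fun x _ => (Real.hasDerivAt_exp x).hasDerivWithinAt)
      (Real.exp_injective.injOn) g]
  simp_rw [abs_of_pos (Real.exp_pos _), smul_eq_mul, integrableOn_univ]

lemma lnrho_transform (τ μ s : ℝ) (hτ : 0 < τ) (y : ℝ) :
    Real.exp y * (Real.exp (s * Real.log (Real.exp y)) * lnrho τ μ (Real.exp y))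
      = (1/(2*Real.sqrt (Real.pi*τ))) * Real.exp (s*y - (y-μ)^2/(4*τ)) := by
  have h2 : 0 < Real.sqrt (Real.pi*τ) := Real.sqrt_pos.mpr (by positivity)
  rw [Real.log_exp,
    show s*y - (y-μ)^2/(4*τ) = s*y + (-(y-μ)^2/(4*τ)) by ring, Real.exp_add]
  unfold lnrho
  rw [Real.log_exp]
  field_simp [Real.exp_ne_zero]

lemma lnrho_moment (τ μ s : ℝ) (hτ : 0 < τ) :
    IntegrableOn (fun z => Real.exp (s * Real.log z) * lnrho τ μ z) (Set.Ioi (0:ℝ)) ∧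
    ∫ z in Set.Ioi (0:ℝ), Real.exp (s * Real.log z) * lnrho τ μ z
      = Real.exp (s*μ + s^2*τ) := by
  have h2 : 0 < Real.sqrt (Real.pi*τ) := Real.sqrt_pos.mpr (by positivity)
  constructor
  · rw [integrableOn_Ioi_comp_exp_iff]
    have : (fun y => Real.exp y * (Real.exp (s * Real.log (Real.exp y)) * lnrho τ μ (Real.exp y)))
        = fun y => (1/(2*Real.sqrt (Real.pi*τ))) * Real.exp (s*y - (y-μ)^2/(4*τ)) := by
      funext y; exact lnrho_transform τ μ s hτ y
    rw [this]
    exact (gauss_integrable τ μ s hτ).const_mul _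
  · rw [integral_Ioi_comp_exp]
    have : (fun y => Real.exp y * (Real.exp (s * Real.log (Real.exp y)) * lnrho τ μ (Real.exp y)))
        = fun y => (1/(2*Real.sqrt (Real.pi*τ))) * Real.exp (s*y - (y-μ)^2/(4*τ)) := by
      funext y; exact lnrho_transform τ μ s hτ y
    rw [this, integral_const_mul, gauss_integral τ μ s hτ]
    field_simp

lemma lnrho_integrableOn (τ μ : ℝ) (hτ : 0 < τ) :
    IntegrableOn (lnrho τ μ) (Set.Ioi (0:ℝ)) := by
  have h := (lnrho_moment τ μ 0 hτ).1
  simpa using h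

lemma lnrho_integral (τ μ : ℝ) (hτ : 0 < τ) :
    ∫ z in Set.Ioi (0:ℝ), lnrho τ μ z = 1 := by
  have h := (lnrho_moment τ μ 0 hτ).2
  simpa using h

lemma lnrho_mul_integrableOn (τ μ : ℝ) (hτ : 0 < τ) :
    IntegrableOn (fun z => z * lnrho τ μ z) (Set.Ioi (0:ℝ)) := by
  refine ((lnrho_moment τ μ 1 hτ).1).congr_fun (fun z hz => ?_) measurableSet_Ioi
  dsimp only
  rw [one_mul, Real.exp_log hz]

lemma lnrho_mul_integral (τ μ : ℝ) (hτ : 0 < τ) :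
    ∫ z in Set.Ioi (0:ℝ), z * lnrho τ μ z = Real.exp (μ + τ) := by
  have h := (lnrho_moment τ μ 1 hτ).2
  rw [show (∫ z in Set.Ioi (0:ℝ), z * lnrho τ μ z)
      = ∫ z in Set.Ioi (0:ℝ), Real.exp (1 * Real.log z) * lnrho τ μ z from
    setIntegral_congr_fun measurableSet_Ioi
      (fun z hz => by rw [one_mul, Real.exp_log hz]), h]
  norm_num

lemma lnrho_pos (τ μ : ℝ) (hτ : 0 < τ) {z : ℝ} (hz : 0 < z) : 0 < lnrho τ μ z := by
  have h2 : 0 < Real.sqrt (Real.pi*τ) := Real.sqrt_pos.mpr (by positivity)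
  unfold lnrho
  positivity

lemma lnrho_nonneg (τ μ : ℝ) (hτ : 0 < τ) {z : ℝ} (hz : 0 < z) : 0 ≤ lnrho τ μ z :=
  (lnrho_pos τ μ hτ hz).le

noncomputable def Wrec (K : ℝ) (c τ μ : ℕ → ℝ) : ℕ → ℝ → ℝ
  | 0 => fun S => max 0 (K - S)
  | (k+1) => fun S =>
      max (c k * ∫ z in Set.Ioi (0:ℝ), Wrec K c τ μ k (S*z) * lnrho (τ k) (μ k) z) (K - S)

noncomputable def Wbound (K : ℝ) (c : ℕ → ℝ) : ℕ → ℝ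
  | 0 => K
  | (k+1) => max (c k * Wbound K c k) K

section generic
variable (K : ℝ) (c τ μ : ℕ → ℝ) (hK : 0 < K) (hc : ∀ k, 0 < c k) (hτ : ∀ k, 0 < τ k)

include hK in
lemma Wbound_pos : ∀ k, 0 < Wbound K c k
  | 0 => hK
  | (k+1) => lt_max_of_lt_right hK

include hc hτ in
lemma Wrec_nonneg : ∀ k S, 0 ≤ Wrec K c τ μ k S
  | 0, S => le_max_left _ _
  | (k+1), S => by
      refine le_trans ?_ (le_max_left _ _)
      refine mul_nonneg (hc k).le (setIntegral_nonneg measurableSet_Ioi fun z hz => ?_)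
      exact mul_nonneg (Wrec_nonneg k _) (lnrho_nonneg _ _ (hτ k) hz)

lemma Wrec_measurable : ∀ k, Measurable (Wrec K c τ μ k)
  | 0 => measurable_const.max (measurable_const.sub measurable_id)
  | (k+1) => by
      refine Measurable.max ?_ (measurable_const.sub measurable_id)
      refine Measurable.const_mul ?_ _
      have hj : StronglyMeasurable (Function.uncurry fun (S z : ℝ) =>
          Wrec K c τ μ k (S*z) * lnrho (τ k) (μ k) z) := by
        refine Measurable.stronglyMeasurable ?_
        exact ((Wrec_measurable k).comp (measurable_fst.mul measurable_snd)).mul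
          ((measurable_lnrho _ _).comp measurable_snd)
      exact (hj.integral_prod_right).measurable

include hK hc hτ in
lemma Wrec_integrableOn (k : ℕ) {S : ℝ} (hS : 0 < S)
    (hb : ∀ y, 0 < y → Wrec K c τ μ k y ≤ Wbound K c k) :
    IntegrableOn (fun z => Wrec K c τ μ k (S*z) * lnrho (τ k) (μ k) z) (Set.Ioi (0:ℝ)) := by
  refine Integrable.mono ((lnrho_integrableOn (τ k) (μ k) (hτ k)).const_mul (Wbound K c k))
    (((Wrec_measurable K c τ μ k).comp (measurable_id.const_mul S)).mul
      (measurable_lnrho _ _)).aestronglyMeasurable ?_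
  refine (ae_restrict_iff' measurableSet_Ioi).2 (Filter.Eventually.of_forall fun z hz => ?_)
  have hz0 : (0:ℝ) < z := hz
  have h1 : 0 ≤ Wrec K c τ μ k (S*z) := Wrec_nonneg K c τ μ hc hτ k _
  have h2 : 0 ≤ lnrho (τ k) (μ k) z := lnrho_nonneg _ _ (hτ k) hz0
  have h3 := hb (S*z) (mul_pos hS hz0)
  have h4 : 0 < Wbound K c k := Wbound_pos K c hK k
  rw [Real.norm_eq_abs, Real.norm_eq_abs, abs_of_nonneg (mul_nonneg h1 h2),
    abs_of_nonneg (mul_nonneg h4.le h2)]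
  exact mul_le_mul_of_nonneg_right h3 h2

include hK hc hτ in
lemma Wrec_le : ∀ k, ∀ S, 0 < S → Wrec K c τ μ k S ≤ Wbound K c k
  | 0, S, hS => by
      simp only [Wrec, Wbound]
      exact max_le hK.le (by linarith)
  | (k+1), S, hS => by
      simp only [Wrec, Wbound]
      refine max_le_max ?_ (by linarith)
      refine mul_le_mul_of_nonneg_left ?_ (hc k).le
      have hmono : ∫ z in Set.Ioi (0:ℝ), Wrec K c τ μ k (S*z) * lnrho (τ k) (μ k) z
          ≤ ∫ z in Set.Ioi (0:ℝ), Wbound K c k * lnrho (τ k) (μ k) z := by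
        refine integral_mono_of_nonneg ?_
          ((lnrho_integrableOn (τ k) (μ k) (hτ k)).const_mul (Wbound K c k)) ?_
        · refine (ae_restrict_iff' measurableSet_Ioi).2 (Filter.Eventually.of_forall fun z hz => ?_)
          exact mul_nonneg (Wrec_nonneg K c τ μ hc hτ k _) (lnrho_nonneg _ _ (hτ k) hz)
        · refine (ae_restrict_iff' measurableSet_Ioi).2 (Filter.Eventually.of_forall fun z hz => ?_)
          exact mul_le_mul_of_nonneg_right (Wrec_le k _ (mul_pos hS hz))
            (lnrho_nonneg _ _ (hτ k) hz)
      calc ∫ z in Set.Ioi (0:ℝ), Wrec K c τ μ k (S*z) * lnrho (τ k) (μ k) z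
          ≤ ∫ z in Set.Ioi (0:ℝ), Wbound K c k * lnrho (τ k) (μ k) z := hmono
        _ = Wbound K c k := by rw [integral_const_mul, lnrho_integral (τ k) (μ k) (hτ k), mul_one]

end generic

section generic2
variable (K : ℝ) (c τ μ : ℕ → ℝ) (hK : 0 < K) (hc : ∀ k, 0 < c k) (hτ : ∀ k, 0 < τ k)
  (hm : ∀ k, c k * Real.exp (μ k + τ k) ≤ 1)

include hK hc hτ hm in
lemma Wrec_slope : ∀ k, ∀ S1 S2 : ℝ, 0 < S1 → S1 ≤ S2 →
    Wrec K c τ μ k S1 ≤ Wrec K c τ μ k S2 + (S2 - S1)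
  | 0, S1, S2, h1, h12 => by
      simp only [Wrec]
      calc max 0 (K - S1) ≤ max (0 + (S2 - S1)) ((K - S2) + (S2 - S1)) :=
            max_le_max (by linarith) (by linarith)
        _ = max 0 (K - S2) + (S2 - S1) := max_add_add_right _ _ _
  | (k+1), S1, S2, h1, h12 => by
      simp only [Wrec]
      have h2 : (0:ℝ) < S2 := lt_of_lt_of_le h1 h12
      have hI1 := Wrec_integrableOn K c τ μ hK hc hτ k h1 (fun y hy => Wrec_le K c τ μ hK hc hτ k y hy)
      have hI2 := Wrec_integrableOn K c τ μ hK hc hτ k h2 (fun y hy => Wrec_le K c τ μ hK hc hτ k y hy)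
      have hIz : IntegrableOn (fun z => (S2 - S1) * (z * lnrho (τ k) (μ k) z)) (Set.Ioi (0:ℝ)) :=
        (lnrho_mul_integrableOn (τ k) (μ k) (hτ k)).const_mul _
      have key : ∫ z in Set.Ioi (0:ℝ), Wrec K c τ μ k (S1*z) * lnrho (τ k) (μ k) z
          ≤ (∫ z in Set.Ioi (0:ℝ), Wrec K c τ μ k (S2*z) * lnrho (τ k) (μ k) z)
            + (S2 - S1) * Real.exp (μ k + τ k) := by
        have hsplit : ∫ z in Set.Ioi (0:ℝ),
            (Wrec K c τ μ k (S2*z) * lnrho (τ k) (μ k) z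
              + (S2 - S1) * (z * lnrho (τ k) (μ k) z))
            = (∫ z in Set.Ioi (0:ℝ), Wrec K c τ μ k (S2*z) * lnrho (τ k) (μ k) z)
              + (S2 - S1) * Real.exp (μ k + τ k) := by
          rw [integral_add hI2 hIz, integral_const_mul, lnrho_mul_integral (τ k) (μ k) (hτ k)]
        rw [← hsplit]
        refine integral_mono_of_nonneg ?_ (hI2.add hIz) ?_
        · refine (ae_restrict_iff' measurableSet_Ioi).2 (Filter.Eventually.of_forall fun z hz => ?_)
          exact mul_nonneg (Wrec_nonneg K c τ μ hc hτ k _) (lnrho_nonneg _ _ (hτ k) hz)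
        · refine (ae_restrict_iff' measurableSet_Ioi).2 (Filter.Eventually.of_forall fun z hz => ?_)
          have hz0 : (0:ℝ) < z := hz
          have hs := Wrec_slope k (S1*z) (S2*z) (mul_pos h1 hz0)
            (by nlinarith)
          have hρ : 0 ≤ lnrho (τ k) (μ k) z := lnrho_nonneg _ _ (hτ k) hz0
          have : Wrec K c τ μ k (S1*z) * lnrho (τ k) (μ k) z
              ≤ (Wrec K c τ μ k (S2*z) + (S2*z - S1*z)) * lnrho (τ k) (μ k) z :=
            mul_le_mul_of_nonneg_right hs hρ
          calc Wrec K c τ μ k (S1*z) * lnrho (τ k) (μ k) z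
              ≤ (Wrec K c τ μ k (S2*z) + (S2*z - S1*z)) * lnrho (τ k) (μ k) z := this
            _ = Wrec K c τ μ k (S2*z) * lnrho (τ k) (μ k) z
                + (S2 - S1) * (z * lnrho (τ k) (μ k) z) := by ring
      have hck := hc k
      have hmk := hm k
      have hD : 0 ≤ S2 - S1 := by linarith
      have hstep : c k * ∫ z in Set.Ioi (0:ℝ), Wrec K c τ μ k (S1*z) * lnrho (τ k) (μ k) z
          ≤ c k * (∫ z in Set.Ioi (0:ℝ), Wrec K c τ μ k (S2*z) * lnrho (τ k) (μ k) z)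
            + (S2 - S1) := by
        have := mul_le_mul_of_nonneg_left key hck.le
        have hle : (S2 - S1) * (c k * Real.exp (μ k + τ k)) ≤ (S2 - S1) * 1 :=
          mul_le_mul_of_nonneg_left hmk hD
        nlinarith
      calc max (c k * ∫ z in Set.Ioi (0:ℝ), Wrec K c τ μ k (S1*z) * lnrho (τ k) (μ k) z) (K - S1)
          ≤ max (c k * (∫ z in Set.Ioi (0:ℝ), Wrec K c τ μ k (S2*z) * lnrho (τ k) (μ k) z)
              + (S2 - S1)) ((K - S2) + (S2 - S1)) :=
            max_le_max hstep (by linarith)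
        _ = max (c k * ∫ z in Set.Ioi (0:ℝ), Wrec K c τ μ k (S2*z) * lnrho (τ k) (μ k) z) (K - S2)
            + (S2 - S1) := max_add_add_right _ _ _

end generic2

section generic3
variable (K : ℝ) (c τ μ : ℕ → ℝ) (hK : 0 < K) (hc : ∀ k, 0 < c k) (hτ : ∀ k, 0 < τ k)
  (hm : ∀ k, c k * Real.exp (μ k + τ k) ≤ 1)

include hK hc hτ hm in
lemma Wrec_strict (k : ℕ) (S1 S2 : ℝ) (h1 : 0 < S1) (h12 : S1 < S2) :
    c k * (∫ z in Set.Ioi (0:ℝ), Wrec K c τ μ k (S1*z) * lnrho (τ k) (μ k) z)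
      - c k * (∫ z in Set.Ioi (0:ℝ), Wrec K c τ μ k (S2*z) * lnrho (τ k) (μ k) z)
      < S2 - S1 := by
  have h2 : (0:ℝ) < S2 := h1.trans h12
  set D : ℝ := S2 - S1 with hDdef
  have hD : 0 < D := by simp only [hDdef]; linarith
  set C : ℝ := Wbound K c k with hCdef
  have hC : 0 < C := Wbound_pos K c hK k
  set ρ : ℝ → ℝ := lnrho (τ k) (μ k) with hρdef
  have hρnn : ∀ z : ℝ, 0 < z → 0 ≤ ρ z := fun z hz => lnrho_nonneg _ _ (hτ k) hz
  have hI1 := Wrec_integrableOn K c τ μ hK hc hτ k h1 (fun y hy => Wrec_le K c τ μ hK hc hτ k y hy)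
  have hI2 := Wrec_integrableOn K c τ μ hK hc hτ k h2 (fun y hy => Wrec_le K c τ μ hK hc hτ k y hy)
  have hImin : IntegrableOn (fun z => min (D*z) C * ρ z) (Set.Ioi (0:ℝ)) := by
    refine Integrable.mono ((lnrho_integrableOn (τ k) (μ k) (hτ k)).const_mul C)
      (((measurable_const.mul measurable_id).min measurable_const).mul
        (measurable_lnrho _ _)).aestronglyMeasurable ?_
    refine (ae_restrict_iff' measurableSet_Ioi).2 (Filter.Eventually.of_forall fun z hz => ?_)
    have hz0 : (0:ℝ) < z := hz
    have hmin0 : 0 ≤ min (D*z) C := le_min (by positivity) hC.le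
    rw [Real.norm_eq_abs, Real.norm_eq_abs, abs_of_nonneg (mul_nonneg hmin0 (hρnn z hz0)),
      abs_of_nonneg (mul_nonneg hC.le (hρnn z hz0))]
    exact mul_le_mul_of_nonneg_right (min_le_right _ _) (hρnn z hz0)
  have hIz : IntegrableOn (fun z => D * (z * ρ z)) (Set.Ioi (0:ℝ)) :=
    (lnrho_mul_integrableOn (τ k) (μ k) (hτ k)).const_mul _
  -- step 1 : ∫ f1 ≤ ∫ f2 + ∫ min
  have step1 : (∫ z in Set.Ioi (0:ℝ), Wrec K c τ μ k (S1*z) * ρ z)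
      ≤ (∫ z in Set.Ioi (0:ℝ), Wrec K c τ μ k (S2*z) * ρ z)
        + ∫ z in Set.Ioi (0:ℝ), min (D*z) C * ρ z := by
    rw [← integral_add hI2 hImin]
    refine integral_mono_of_nonneg ?_ (hI2.add hImin) ?_
    · refine (ae_restrict_iff' measurableSet_Ioi).2 (Filter.Eventually.of_forall fun z hz => ?_)
      exact mul_nonneg (Wrec_nonneg K c τ μ hc hτ k _) (hρnn z hz)
    · refine (ae_restrict_iff' measurableSet_Ioi).2 (Filter.Eventually.of_forall fun z hz => ?_)
      have hz0 : (0:ℝ) < z := hz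
      have hslope := Wrec_slope K c τ μ hK hc hτ hm k (S1*z) (S2*z)
        (mul_pos h1 hz0) (by nlinarith)
      have hub := Wrec_le K c τ μ hK hc hτ k (S1*z) (mul_pos h1 hz0)
      have hlb := Wrec_nonneg K c τ μ hc hτ k (S2*z)
      have hρz := hρnn z hz0
      show Wrec K c τ μ k (S1*z) * ρ z
        ≤ Wrec K c τ μ k (S2*z) * ρ z + min (D*z) C * ρ z
      rcases le_total (D*z) C with hmin | hmin
      · rw [min_eq_left hmin]
        have : Wrec K c τ μ k (S1*z) ≤ Wrec K c τ μ k (S2*z) + D*z := by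
          simp only [hDdef]; nlinarith
        nlinarith
      · rw [min_eq_right hmin]
        have : Wrec K c τ μ k (S1*z) ≤ Wrec K c τ μ k (S2*z) + C := by nlinarith
        nlinarith
  -- step 2 : ∫ min < ∫ D z ρ = D * exp (μ + τ)
  have step2 : (∫ z in Set.Ioi (0:ℝ), min (D*z) C * ρ z)
      < D * Real.exp (μ k + τ k) := by
    have hzint : (∫ z in Set.Ioi (0:ℝ), D * (z * ρ z)) = D * Real.exp (μ k + τ k) := by
      rw [integral_const_mul, hρdef, lnrho_mul_integral (τ k) (μ k) (hτ k)]
    have hpos : 0 < ∫ z in Set.Ioi (0:ℝ), (D * (z * ρ z) - min (D*z) C * ρ z) := by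
      refine (setIntegral_pos_iff_support_of_nonneg_ae ?_ ?_).2 ?_
      case refine_2 => exact hIz.sub hImin
      case refine_1 =>
        refine (ae_restrict_iff' measurableSet_Ioi).2 (Filter.Eventually.of_forall fun z hz => ?_)
        have hz0 : (0:ℝ) < z := hz
        have := min_le_left (D*z) C
        show (0:ℝ) ≤ D * (z * ρ z) - min (D*z) C * ρ z
        nlinarith [hρnn z hz0]
      · refine lt_of_lt_of_le ?_ (measure_mono (?_ :
          Set.Ioi (max 1 (C/D)) ⊆
            (Function.support fun z => D * (z * ρ z) - min (D*z) C * ρ z) ∩ Set.Ioi 0))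
        · simp [Real.volume_Ioi]
        · intro z hz
          have hz1 : (1:ℝ) < z := lt_of_le_of_lt (le_max_left _ _) hz
          have hz0 : (0:ℝ) < z := by linarith
          have hzC : C/D < z := lt_of_le_of_lt (le_max_right _ _) hz
          have hCD : C < D*z := by
            rw [div_lt_iff₀ hD] at hzC; linarith [hzC]
          have hρz : 0 < ρ z := lnrho_pos _ _ (hτ k) hz0
          constructor
          · simp only [Function.mem_support]
            rw [min_eq_right hCD.le]
            nlinarith
          · exact hz0
    rw [integral_sub hIz hImin, hzint] at hpos
    linarith
  have hck := hc k
  have hmk := hm k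
  have hfinal : c k * (D * Real.exp (μ k + τ k)) ≤ D := by nlinarith
  nlinarith [mul_le_mul_of_nonneg_left step1 hck.le,
    mul_lt_mul_of_pos_left step2 hck]

end generic3

/-- Under the Bermudan put recursion with `q_m ≥ 0`, for each `1 ≤ m ≤ M-1`
the equation `Ṽ_m(S) = K - S` has at most one solution `S ∈ (0,∞)`. -/
theorem stmt7 (M : ℕ) (hM : 2 ≤ M) (K : ℝ) (hK : 0 < K) (t r q σ : ℕ → ℝ)
    (hq : ∀ m, 1 ≤ m → m ≤ M → 0 ≤ q m) (hσ : ∀ m, 0 < σ m)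
    (ht : ∀ m, 1 ≤ m → m ≤ M → t (m - 1) < t m)
    (V Vt : ℕ → ℝ → ℝ)
    (hVM : ∀ S : ℝ, V M S = max 0 (K - S))
    (hVt : ∀ m, 1 ≤ m → m ≤ M → ∀ S : ℝ, 0 < S →
      Vt (m - 1) S = Real.exp (-2 * r m * tauBS σ t m / (σ m)^2) *
        ∫ z in Set.Ioi (0:ℝ), V m (S * z) * rho1BS r q σ t m z)
    (hV : ∀ m, 1 ≤ m → m ≤ M → ∀ S : ℝ, 0 < S →
      V (m - 1) S = max (Vt (m - 1) S) (K - S)) :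
    ∀ m, 1 ≤ m → m ≤ M - 1 → ∀ S1 S2 : ℝ, 0 < S1 → 0 < S2 →
      Vt m S1 = K - S1 → Vt m S2 = K - S2 → S1 = S2 := by
  intro m hm1 hm2 S1 S2 hS1 hS2 hE1 hE2
  set τ' : ℕ → ℝ := fun k => if 1 ≤ M - k then tauBS σ t (M - k) else 1 with hτ'def
  set μ' : ℕ → ℝ := fun k => if 1 ≤ M - k then
      2 / (σ (M-k))^2 * (r (M-k) - q (M-k) - (σ (M-k))^2 / 2) * tauBS σ t (M-k) else -1
    with hμ'def
  set c' : ℕ → ℝ := fun k => if 1 ≤ M - k then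
      Real.exp (-2 * r (M-k) * tauBS σ t (M-k) / (σ (M-k))^2) else 1 with hc'def
  have htau_pos : ∀ j, 1 ≤ j → j ≤ M → 0 < tauBS σ t j := by
    intro j h1 h2
    unfold tauBS
    exact div_pos (mul_pos (pow_pos (hσ j) 2) (sub_pos.mpr (ht j h1 h2))) two_pos
  have hτ' : ∀ k, 0 < τ' k := by
    intro k; by_cases h : 1 ≤ M - k
    · simp only [hτ'def, if_pos h]; exact htau_pos _ h (Nat.sub_le M k)
    · simp only [hτ'def, if_neg h]; norm_num
  have hc' : ∀ k, 0 < c' k := by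
    intro k; by_cases h : 1 ≤ M - k
    · simp only [hc'def, if_pos h]; exact Real.exp_pos _
    · simp only [hc'def, if_neg h]; norm_num
  have hm' : ∀ k, c' k * Real.exp (μ' k + τ' k) ≤ 1 := by
    intro k; by_cases h : 1 ≤ M - k
    · simp only [hc'def, hμ'def, hτ'def, if_pos h]
      rw [← Real.exp_add]
      rw [Real.exp_le_one_iff]
      have hσ2 : (σ (M-k))^2 ≠ 0 := pow_ne_zero 2 (hσ (M-k)).ne'
      have heq : -2 * r (M-k) * tauBS σ t (M-k) / (σ (M-k))^2 +
          (2 / (σ (M-k))^2 * (r (M-k) - q (M-k) - (σ (M-k))^2 / 2) * tauBS σ t (M-k)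
            + tauBS σ t (M-k))
          = -(2 * q (M-k) * tauBS σ t (M-k) / (σ (M-k))^2) := by
        have hσ1 : σ (M-k) ≠ 0 := (hσ (M-k)).ne'
        field_simp
        ring
      rw [heq]
      have hqk := hq (M-k) h (Nat.sub_le M k)
      have hτk := htau_pos (M-k) h (Nat.sub_le M k)
      have : 0 ≤ 2 * q (M-k) * tauBS σ t (M-k) / (σ (M-k))^2 := by positivity
      linarith
    · simp only [hc'def, hμ'def, hτ'def, if_neg h]
      norm_num
  have hlink : ∀ k, k ≤ M - 1 → ∀ S, 0 < S → V (M - k) S = Wrec K c' τ' μ' k S := by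
    intro k
    induction k with
    | zero =>
        intro _ S hS
        rw [Nat.sub_zero, hVM S]
        simp [Wrec]
    | succ k ih =>
        intro hk S hS
        have hk' : k ≤ M - 1 := by omega
        have hj1 : 1 ≤ M - k := by omega
        have hjM : M - k ≤ M := Nat.sub_le _ _
        have e1 : M - (k+1) = (M - k) - 1 := by omega
        rw [e1, hV (M-k) hj1 hjM S hS, hVt (M-k) hj1 hjM S hS]
        have hρ : rho1BS r q σ t (M-k) = lnrho (τ' k) (μ' k) := by
          funext z
          simp only [hτ'def, hμ'def, if_pos hj1]
          rfl
        have hint : (∫ z in Set.Ioi (0:ℝ), V (M-k) (S*z) * rho1BS r q σ t (M-k) z)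
            = ∫ z in Set.Ioi (0:ℝ), Wrec K c' τ' μ' k (S*z) * lnrho (τ' k) (μ' k) z := by
          rw [hρ]
          exact setIntegral_congr_fun measurableSet_Ioi
            (fun z hz => by rw [ih hk' (S*z) (mul_pos hS hz)])
        rw [hint]
        have hcc : Real.exp (-2 * r (M-k) * tauBS σ t (M-k) / (σ (M-k))^2) = c' k := by
          simp only [hc'def, if_pos hj1]
        rw [hcc]
        simp [Wrec]
  set k := M - (m+1) with hkdef
  have hk1 : M - k = m + 1 := by omega
  have hkM : k ≤ M - 1 := by omega
  have hVtW : ∀ S, 0 < S →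
      Vt m S = c' k * ∫ z in Set.Ioi (0:ℝ), Wrec K c' τ' μ' k (S*z) * lnrho (τ' k) (μ' k) z := by
    intro S hS
    have h1 : 1 ≤ m+1 := by omega
    have h2 : m+1 ≤ M := by omega
    have hv := hVt (m+1) h1 h2 S hS
    rw [Nat.add_sub_cancel] at hv
    rw [hv]
    have hj1 : 1 ≤ M - k := by omega
    have hρ : rho1BS r q σ t (m+1) = lnrho (τ' k) (μ' k) := by
      funext z
      simp only [hτ'def, hμ'def, if_pos hj1, hk1]
      rfl
    have hcc : Real.exp (-2 * r (m+1) * tauBS σ t (m+1) / (σ (m+1))^2) = c' k := by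
      simp only [hc'def, if_pos hj1, hk1]
    have hint : (∫ z in Set.Ioi (0:ℝ), V (m+1) (S*z) * rho1BS r q σ t (m+1) z)
        = ∫ z in Set.Ioi (0:ℝ), Wrec K c' τ' μ' k (S*z) * lnrho (τ' k) (μ' k) z := by
      rw [hρ]
      refine setIntegral_congr_fun measurableSet_Ioi (fun z hz => ?_)
      rw [show m+1 = M - k from hk1.symm, hlink k hkM (S*z) (mul_pos hS hz)]
    rw [hint, hcc]
  have hW1 := hVtW S1 hS1
  have hW2 := hVtW S2 hS2
  rw [hE1] at hW1
  rw [hE2] at hW2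
  by_contra hne
  rcases lt_trichotomy S1 S2 with h | h | h
  · have := Wrec_strict K c' τ' μ' hK hc' hτ' hm' k S1 S2 hS1 h
    rw [← hW1, ← hW2] at this
    linarith
  · exact hne h
  · have := Wrec_strict K c' τ' μ' hK hc' hτ' hm' k S2 S1 hS2 h
    rw [← hW1, ← hW2] at this
    linarith
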